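/- Let Λ, Λ' be g-fusion Bessel sequences in H with synthesis operators T_Λ, T_{Λ'} satisfying T_{Λ'} T_Λ* = I_H (dual pair), and Γ, Γ' g-fusion Bessel sequences in K with T_{Γ'} T_Γ* = I_K, with Bessel bounds B, D, E, F respectively. Then Λ ⊗ Γ is a g-fusion frame for H ⊗ K with lower bound 1/(DF) and upper bound BE, and similarly Λ' ⊗ Γ' is a g-fusion frame for H ⊗ K. -/

import Mathlib

noncomputable section

open Submodule ContinuousLinearMap

local notation "⟪" x ", " y "⟫" => @inner ℂ _ _ x y

/-- An abstract realization of the Hilbert-space tensor product of `H` and `K`: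
a map `tmul : H → K → E` whose inner products multiply and whose elementary
tensors have dense span. -/
structure HilbertTensor (H K E : Type*) [NormedAddCommGroup H] [InnerProductSpace ℂ H]
    [NormedAddCommGroup K] [InnerProductSpace ℂ K]
    [NormedAddCommGroup E] [InnerProductSpace ℂ E] where
  tmul : H → K → E
  inner_tmul : ∀ (f f' : H) (g g' : K),
    ⟪tmul f g, tmul f' g'⟫ = ⟪f, f'⟫ * ⟪g, g'⟫
  dense_span : Dense (Submodule.span ℂ (Set.range fun p : H × K => tmul p.1 p.2) : Set E)

variable {H K E H' K' E' : Type*}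
variable [NormedAddCommGroup H] [InnerProductSpace ℂ H]
variable [NormedAddCommGroup K] [InnerProductSpace ℂ K]
variable [NormedAddCommGroup E] [InnerProductSpace ℂ E]
variable [NormedAddCommGroup H'] [InnerProductSpace ℂ H']
variable [NormedAddCommGroup K'] [InnerProductSpace ℂ K']
variable [NormedAddCommGroup E'] [InnerProductSpace ℂ E']

/-- The orthogonal projection onto a (closed) subspace, as an operator `H →L[ℂ] H`. -/
def projL (V : Submodule ℂ H) [HasOrthogonalProjection V] : H →L[ℂ] H :=
  V.subtypeL.comp (orthogonalProjection V)

/-- `R` is the tensor product operator `Q ⊗ T`, i.e. it is determined on elementary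
tensors by `(Q ⊗ T)(f ⊗ g) = Qf ⊗ Tg`. -/
def IsTensorOp (tp : HilbertTensor H K E) (tp' : HilbertTensor H' K' E')
    (Q : H →L[ℂ] H') (T : K →L[ℂ] K') (R : E →L[ℂ] E') : Prop :=
  ∀ (f : H) (g : K), R (tp.tmul f g) = tp'.tmul (Q f) (T g)

/-- The tensor product `V ⊗ W` of subspaces: the closure of the span of elementary
tensors of elements of `V` and `W`. -/
def tsub (tp : HilbertTensor H K E) (V : Submodule ℂ H) (W : Submodule ℂ K) : Submodule ℂ E :=
  (Submodule.span ℂ {x : E | ∃ f ∈ V, ∃ g ∈ W, x = tp.tmul f g}).topologicalClosure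

/-- `{(V i, Λ i, v i)}` is a g-fusion Bessel sequence in `H` with bound `B`. -/
def IsGFusionBessel {ι : Type*} {Hi : ι → Type*}
    [∀ i, NormedAddCommGroup (Hi i)] [∀ i, InnerProductSpace ℂ (Hi i)]
    (V : ι → Submodule ℂ H) [∀ i, HasOrthogonalProjection (V i)]
    (Λ : ∀ i, H →L[ℂ] Hi i) (v : ι → ℝ) (B : ℝ) : Prop :=
  (∀ i, 0 < v i) ∧ 0 < B ∧
    ∀ f : H, ∑' i, (v i) ^ 2 * ‖Λ i (projL (V i) f)‖ ^ 2 ≤ B * ‖f‖ ^ 2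

/-- `{(V i, Λ i, v i)}` is a g-fusion frame for `H` with bounds `A ≤ B`. -/
def IsGFusionFrame {ι : Type*} {Hi : ι → Type*}
    [∀ i, NormedAddCommGroup (Hi i)] [∀ i, InnerProductSpace ℂ (Hi i)]
    (V : ι → Submodule ℂ H) [∀ i, HasOrthogonalProjection (V i)]
    (Λ : ∀ i, H →L[ℂ] Hi i) (v : ι → ℝ) (A B : ℝ) : Prop :=
  (∀ i, 0 < v i) ∧ 0 < A ∧ A ≤ B ∧
    ∀ f : H, A * ‖f‖ ^ 2 ≤ ∑' i, (v i) ^ 2 * ‖Λ i (projL (V i) f)‖ ^ 2 ∧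
      ∑' i, (v i) ^ 2 * ‖Λ i (projL (V i) f)‖ ^ 2 ≤ B * ‖f‖ ^ 2


section AuxLemmas

variable {ι : Type*} {Hi : ι → Type*} [∀ i, NormedAddCommGroup (Hi i)]
    [∀ i, InnerProductSpace ℂ (Hi i)] [∀ i, CompleteSpace (Hi i)] [CompleteSpace H]

lemma aux_adjoint_apply_eq
    (V : ι → Submodule ℂ H) [∀ i, HasOrthogonalProjection (V i)]
    (Λ : ∀ i, H →L[ℂ] Hi i) (v : ι → ℝ)
    (T : lp (fun i => Hi i) 2 →L[ℂ] H)
    (hT : ∀ x : lp (fun i => Hi i) 2,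
      T x = ∑' i, v i • projL (V i) (ContinuousLinearMap.adjoint (Λ i) (x i)))
    (f : H) (i : ι) :
    (ContinuousLinearMap.adjoint T f) i = v i • Λ i (projL (V i) f) := by
  classical
  apply ext_inner_right ℂ
  intro ξ
  have h1 : ⟪(ContinuousLinearMap.adjoint T f) i, ξ⟫
      = ⟪ContinuousLinearMap.adjoint T f, lp.single 2 i ξ⟫ := by
    rw [lp.inner_single_right]
  rw [h1, adjoint_inner_left, hT]
  have h2 : (∑' i', v i' • projL (V i') (ContinuousLinearMap.adjoint (Λ i')
      ((lp.single 2 i ξ) i'))) = v i • projL (V i) (ContinuousLinearMap.adjoint (Λ i) ξ) := by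
    rw [tsum_eq_single i]
    · rw [lp.single_apply_self]
    · intro b hb
      rw [lp.single_apply_ne 2 i _ hb]
      simp
  rw [h2, RCLike.real_smul_eq_coe_smul (K := ℂ) (v i),
    RCLike.real_smul_eq_coe_smul (K := ℂ) (v i) (Λ i (projL (V i) f)), inner_smul_right,
    inner_smul_left, RCLike.conj_ofReal]
  congr 1
  show ⟪f, (V i).starProjection (ContinuousLinearMap.adjoint (Λ i) ξ)⟫ = _
  rw [← inner_starProjection_left_eq_right, adjoint_inner_right]
  rfl

lemma aux_norm_sq_lp (y : lp (fun i => Hi i) 2) :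
    HasSum (fun i => ‖y i‖ ^ 2) (‖y‖ ^ 2) := by
  have h := lp.hasSum_inner (𝕜 := ℂ) y y
  have h2 := h.mapL Complex.reCLM
  have h3 : (fun i => Complex.reCLM ⟪y i, y i⟫) = fun i => ‖y i‖ ^ 2 := by
    funext i
    simpa using inner_self_eq_norm_sq (𝕜 := ℂ) (y i)
  rw [h3] at h2
  have h4 : Complex.reCLM ⟪y, y⟫ = ‖y‖ ^ 2 := by
    simpa using inner_self_eq_norm_sq (𝕜 := ℂ) y
  rwa [h4] at h2

lemma aux_bessel_sum_eq
    (V : ι → Submodule ℂ H) [∀ i, HasOrthogonalProjection (V i)]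
    (Λ : ∀ i, H →L[ℂ] Hi i) (v : ι → ℝ)
    (T : lp (fun i => Hi i) 2 →L[ℂ] H)
    (hT : ∀ x : lp (fun i => Hi i) 2,
      T x = ∑' i, v i • projL (V i) (ContinuousLinearMap.adjoint (Λ i) (x i)))
    (f : H) :
    HasSum (fun i => v i ^ 2 * ‖Λ i (projL (V i) f)‖ ^ 2)
      (‖ContinuousLinearMap.adjoint T f‖ ^ 2) := by
  have h := aux_norm_sq_lp (ContinuousLinearMap.adjoint T f)
  have he : (fun i => ‖(ContinuousLinearMap.adjoint T f) i‖ ^ 2)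
      = fun i => v i ^ 2 * ‖Λ i (projL (V i) f)‖ ^ 2 := by
    funext i
    rw [aux_adjoint_apply_eq V Λ v T hT f i, norm_smul, mul_pow]
    congr 1
    simpa using sq_abs (v i)
  rwa [he] at h

lemma aux_dual_norm_le
    (TΛ TΛ' : lp (fun i => Hi i) 2 →L[ℂ] H)
    (hdual : TΛ'.comp (ContinuousLinearMap.adjoint TΛ) = ContinuousLinearMap.id ℂ H)
    (f : H) :
    ‖f‖ ^ 2 ≤ ‖ContinuousLinearMap.adjoint TΛ f‖ * ‖ContinuousLinearMap.adjoint TΛ' f‖ := by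
  have h0 : TΛ' (ContinuousLinearMap.adjoint TΛ f) = f := by
    have := ContinuousLinearMap.ext_iff.mp hdual f
    simpa using this
  have h1 : ⟪f, f⟫ = ⟪ContinuousLinearMap.adjoint TΛ f, ContinuousLinearMap.adjoint TΛ' f⟫ := by
    calc ⟪f, f⟫ = ⟪TΛ' (ContinuousLinearMap.adjoint TΛ f), f⟫ := by rw [h0]
      _ = _ := (adjoint_inner_right TΛ' _ f).symm
  have h2 : (‖f‖ : ℝ) ^ 2 = Complex.re ⟪f, f⟫ := (inner_self_eq_norm_sq (𝕜 := ℂ) f).symm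
  rw [h2, h1]
  calc Complex.re ⟪ContinuousLinearMap.adjoint TΛ f, ContinuousLinearMap.adjoint TΛ' f⟫
      ≤ ‖⟪ContinuousLinearMap.adjoint TΛ f, ContinuousLinearMap.adjoint TΛ' f⟫‖ :=
        Complex.re_le_norm _
    _ ≤ _ := norm_inner_le_norm _ _

lemma aux_seq_bounds
    (V V' : ι → Submodule ℂ H) [∀ i, HasOrthogonalProjection (V i)]
    [∀ i, HasOrthogonalProjection (V' i)]
    (Λ Λ' : ∀ i, H →L[ℂ] Hi i) (v v' : ι → ℝ) (B D : ℝ)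
    (hΛ : IsGFusionBessel V Λ v B) (hΛ' : IsGFusionBessel V' Λ' v' D)
    (TΛ TΛ' : lp (fun i => Hi i) 2 →L[ℂ] H)
    (hTΛ : ∀ x : lp (fun i => Hi i) 2,
      TΛ x = ∑' i, v i • projL (V i) (ContinuousLinearMap.adjoint (Λ i) (x i)))
    (hTΛ' : ∀ x : lp (fun i => Hi i) 2,
      TΛ' x = ∑' i, v' i • projL (V' i) (ContinuousLinearMap.adjoint (Λ' i) (x i)))
    (hdual : TΛ'.comp (ContinuousLinearMap.adjoint TΛ) = ContinuousLinearMap.id ℂ H)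
    (f : H) :
    Summable (fun i => v i ^ 2 * ‖Λ i (projL (V i) f)‖ ^ 2) ∧
    ‖f‖ ^ 2 / D ≤ ∑' i, v i ^ 2 * ‖Λ i (projL (V i) f)‖ ^ 2 ∧
    ∑' i, v i ^ 2 * ‖Λ i (projL (V i) f)‖ ^ 2 ≤ B * ‖f‖ ^ 2 := by
  have hS := aux_bessel_sum_eq V Λ v TΛ hTΛ f
  have hS' := aux_bessel_sum_eq V' Λ' v' TΛ' hTΛ' f
  refine ⟨hS.summable, ?_, hΛ.2.2 f⟩
  have hdn := aux_dual_norm_le TΛ TΛ' hdual f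
  have hD : 0 < D := hΛ'.2.1
  have hb2 : ‖ContinuousLinearMap.adjoint TΛ' f‖ ^ 2 ≤ D * ‖f‖ ^ 2 := by
    rw [← hS'.tsum_eq]; exact hΛ'.2.2 f
  rw [hS.tsum_eq, div_le_iff₀ hD]
  set a := ‖ContinuousLinearMap.adjoint TΛ f‖ with ha
  set b := ‖ContinuousLinearMap.adjoint TΛ' f‖ with hb
  have han : 0 ≤ a := norm_nonneg _
  have hbn : 0 ≤ b := norm_nonneg _
  rcases eq_or_lt_of_le (sq_nonneg ‖f‖) with h0 | h0
  · nlinarith [sq_nonneg a]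
  · have h4 : ‖f‖ ^ 2 * ‖f‖ ^ 2 ≤ (a * b) * (a * b) :=
      mul_le_mul hdn hdn (sq_nonneg ‖f‖) (mul_nonneg han hbn)
    have h5 : a ^ 2 * b ^ 2 ≤ a ^ 2 * (D * ‖f‖ ^ 2) :=
      mul_le_mul_of_nonneg_left hb2 (sq_nonneg a)
    nlinarith [h4, h5, h0]

end AuxLemmas

lemma aux_norm_tmul (tp : HilbertTensor H K E) (f : H) (g : K) :
    ‖tp.tmul f g‖ ^ 2 = ‖f‖ ^ 2 * ‖g‖ ^ 2 := by
  have h := inner_self_eq_norm_sq (𝕜 := ℂ) (tp.tmul f g)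
  rw [tp.inner_tmul, inner_self_eq_norm_sq_to_K, inner_self_eq_norm_sq_to_K] at h
  rw [← h, ← RCLike.ofReal_pow, ← RCLike.ofReal_pow, ← RCLike.ofReal_mul]
  exact RCLike.ofReal_re _

lemma aux_proj_tmul (tp : HilbertTensor H K E) (V : Submodule ℂ H) (W : Submodule ℂ K)
    [HasOrthogonalProjection V] [HasOrthogonalProjection W]
    [HasOrthogonalProjection (tsub tp V W)] (f : H) (g : K) :
    projL (tsub tp V W) (tp.tmul f g) = tp.tmul (projL V f) (projL W g) := by
  show (tsub tp V W).starProjection (tp.tmul f g) = _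
  apply eq_starProjection_of_mem_of_inner_eq_zero
  · exact Submodule.le_topologicalClosure _
      (Submodule.subset_span ⟨projL V f, (orthogonalProjection V f).2, projL W g,
        (orthogonalProjection W g).2, rfl⟩)
  · intro x hx
    set u := tp.tmul f g - tp.tmul (projL V f) (projL W g) with hu
    have hker : tsub tp V W ≤ (innerSL ℂ u).ker := by
      apply Submodule.topologicalClosure_minimal
      · rw [Submodule.span_le]
        rintro y ⟨a, ha, b, hb, rfl⟩
        simp only [SetLike.mem_coe, LinearMap.mem_ker]
        show ⟪u, tp.tmul a b⟫ = 0
        have hPa : ⟪(projL V f : H), a⟫ = ⟪f, a⟫ := by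
          show ⟪V.starProjection f, a⟫ = _
          rw [inner_starProjection_left_eq_right,
            starProjection_eq_self_iff.mpr ha]
        have hPb : ⟪(projL W g : K), b⟫ = ⟪g, b⟫ := by
          show ⟪W.starProjection g, b⟫ = _
          rw [inner_starProjection_left_eq_right,
            starProjection_eq_self_iff.mpr hb]
        rw [hu, inner_sub_left, tp.inner_tmul, tp.inner_tmul, hPa, hPb, sub_self]
      · exact ContinuousLinearMap.isClosed_ker (innerSL ℂ u)
    exact hker hx


set_option maxHeartbeats 1000000 in
/-- if `(Λ, Λ')` and `(Γ, Γ')` are dual pairs of g-fusion Bessel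
sequences (`T_{Λ'} T_Λ* = I_H`, `T_{Γ'} T_Γ* = I_K`) with Bessel bounds
`B₀, D₀, E₀, F₀`, then `Λ ⊗ Γ` is a g-fusion frame for `H ⊗ K` with bounds
`1/(D₀F₀)` and `B₀E₀`, and similarly `Λ' ⊗ Γ'` is a g-fusion frame for `H ⊗ K`. -/
theorem stmt_16 {ι κ : Type*} [CompleteSpace H] [CompleteSpace K] [CompleteSpace E]
    {Hi : ι → Type*} [∀ i, NormedAddCommGroup (Hi i)] [∀ i, InnerProductSpace ℂ (Hi i)]
    [∀ i, CompleteSpace (Hi i)]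
    {Kj : κ → Type*} [∀ j, NormedAddCommGroup (Kj j)] [∀ j, InnerProductSpace ℂ (Kj j)]
    [∀ j, CompleteSpace (Kj j)]
    {Eij : ι → κ → Type*} [∀ i j, NormedAddCommGroup (Eij i j)]
    [∀ i j, InnerProductSpace ℂ (Eij i j)] [∀ i j, CompleteSpace (Eij i j)]
    (tp : HilbertTensor H K E) (tpij : ∀ i j, HilbertTensor (Hi i) (Kj j) (Eij i j))
    (V V' : ι → Submodule ℂ H) [∀ i, HasOrthogonalProjection (V i)]
    [∀ i, HasOrthogonalProjection (V' i)]
    (W W' : κ → Submodule ℂ K) [∀ j, HasOrthogonalProjection (W j)]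
    [∀ j, HasOrthogonalProjection (W' j)]
    [∀ i j, HasOrthogonalProjection (tsub tp (V i) (W j))]
    [∀ i j, HasOrthogonalProjection (tsub tp (V' i) (W' j))]
    (Λ Λ' : ∀ i, H →L[ℂ] Hi i) (Γ Γ' : ∀ j, K →L[ℂ] Kj j)
    (v v' : ι → ℝ) (w w' : κ → ℝ) (B₀ D₀ E₀ F₀ : ℝ)
    (hΛ : IsGFusionBessel V Λ v B₀) (hΛ' : IsGFusionBessel V' Λ' v' D₀)
    (hΓ : IsGFusionBessel W Γ w E₀) (hΓ' : IsGFusionBessel W' Γ' w' F₀)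
    (TΛ TΛ' : lp (fun i => Hi i) 2 →L[ℂ] H) (TΓ TΓ' : lp (fun j => Kj j) 2 →L[ℂ] K)
    (hTΛ : ∀ x : lp (fun i => Hi i) 2,
      TΛ x = ∑' i, v i • projL (V i) (ContinuousLinearMap.adjoint (Λ i) (x i)))
    (hTΛ' : ∀ x : lp (fun i => Hi i) 2,
      TΛ' x = ∑' i, v' i • projL (V' i) (ContinuousLinearMap.adjoint (Λ' i) (x i)))
    (hTΓ : ∀ y : lp (fun j => Kj j) 2,
      TΓ y = ∑' j, w j • projL (W j) (ContinuousLinearMap.adjoint (Γ j) (y j)))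
    (hTΓ' : ∀ y : lp (fun j => Kj j) 2,
      TΓ' y = ∑' j, w' j • projL (W' j) (ContinuousLinearMap.adjoint (Γ' j) (y j)))
    (hdual1 : TΛ'.comp (ContinuousLinearMap.adjoint TΛ) = ContinuousLinearMap.id ℂ H)
    (hdual2 : TΓ'.comp (ContinuousLinearMap.adjoint TΓ) = ContinuousLinearMap.id ℂ K)
    (Rij R'ij : ∀ i j, E →L[ℂ] Eij i j)
    (hRij : ∀ i j, IsTensorOp tp (tpij i j) (Λ i) (Γ j) (Rij i j))
    (hR'ij : ∀ i j, IsTensorOp tp (tpij i j) (Λ' i) (Γ' j) (R'ij i j)) :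
    (∀ (f : H) (g : K),
      1 / (D₀ * F₀) * ‖tp.tmul f g‖ ^ 2 ≤
        ∑' p : ι × κ, (v p.1 * w p.2) ^ 2 *
          ‖Rij p.1 p.2 (projL (tsub tp (V p.1) (W p.2)) (tp.tmul f g))‖ ^ 2 ∧
      ∑' p : ι × κ, (v p.1 * w p.2) ^ 2 *
          ‖Rij p.1 p.2 (projL (tsub tp (V p.1) (W p.2)) (tp.tmul f g))‖ ^ 2 ≤
        B₀ * E₀ * ‖tp.tmul f g‖ ^ 2) ∧
    (∀ (f : H) (g : K),
      1 / (B₀ * E₀) * ‖tp.tmul f g‖ ^ 2 ≤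
        ∑' p : ι × κ, (v' p.1 * w' p.2) ^ 2 *
          ‖R'ij p.1 p.2 (projL (tsub tp (V' p.1) (W' p.2)) (tp.tmul f g))‖ ^ 2 ∧
      ∑' p : ι × κ, (v' p.1 * w' p.2) ^ 2 *
          ‖R'ij p.1 p.2 (projL (tsub tp (V' p.1) (W' p.2)) (tp.tmul f g))‖ ^ 2 ≤
        D₀ * F₀ * ‖tp.tmul f g‖ ^ 2) := by
  have hdual1' : TΛ.comp (ContinuousLinearMap.adjoint TΛ') = ContinuousLinearMap.id ℂ H := by
    have h := congrArg ContinuousLinearMap.adjoint hdual1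
    rwa [adjoint_comp, adjoint_adjoint, adjoint_id] at h
  have hdual2' : TΓ.comp (ContinuousLinearMap.adjoint TΓ') = ContinuousLinearMap.id ℂ K := by
    have h := congrArg ContinuousLinearMap.adjoint hdual2
    rwa [adjoint_comp, adjoint_adjoint, adjoint_id] at h
  constructor
  · intro f g
    obtain ⟨sΛ, lΛ, uΛ⟩ := aux_seq_bounds V V' Λ Λ' v v' B₀ D₀ hΛ hΛ' TΛ TΛ' hTΛ hTΛ' hdual1 f
    obtain ⟨sΓ, lΓ, uΓ⟩ := aux_seq_bounds W W' Γ Γ' w w' E₀ F₀ hΓ hΓ' TΓ TΓ' hTΓ hTΓ' hdual2 g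
    have hrw : ∀ p : ι × κ, (v p.1 * w p.2) ^ 2 *
        ‖Rij p.1 p.2 (projL (tsub tp (V p.1) (W p.2)) (tp.tmul f g))‖ ^ 2
        = (v p.1 ^ 2 * ‖Λ p.1 (projL (V p.1) f)‖ ^ 2) *
          (w p.2 ^ 2 * ‖Γ p.2 (projL (W p.2) g)‖ ^ 2) := by
      intro p
      rw [aux_proj_tmul tp (V p.1) (W p.2) f g, hRij p.1 p.2,
        aux_norm_tmul (tpij p.1 p.2)]
      ring
    have hnn1 : ∀ i, 0 ≤ v i ^ 2 * ‖Λ i (projL (V i) f)‖ ^ 2 := fun i => by positivity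
    have hnn2 : ∀ j, 0 ≤ w j ^ 2 * ‖Γ j (projL (W j) g)‖ ^ 2 := fun j => by positivity
    have hprod : (∑' p : ι × κ, (v p.1 * w p.2) ^ 2 *
        ‖Rij p.1 p.2 (projL (tsub tp (V p.1) (W p.2)) (tp.tmul f g))‖ ^ 2)
        = (∑' i, v i ^ 2 * ‖Λ i (projL (V i) f)‖ ^ 2) *
          (∑' j, w j ^ 2 * ‖Γ j (projL (W j) g)‖ ^ 2) := by
      rw [tsum_congr hrw]
      exact (Summable.tsum_mul_tsum sΛ sΓ (sΛ.mul_of_nonneg sΓ hnn1 hnn2)).symm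
    rw [hprod, aux_norm_tmul tp]
    have hSΛnn : 0 ≤ ∑' i, v i ^ 2 * ‖Λ i (projL (V i) f)‖ ^ 2 := tsum_nonneg hnn1
    have hSΓnn : 0 ≤ ∑' j, w j ^ 2 * ‖Γ j (projL (W j) g)‖ ^ 2 := tsum_nonneg hnn2
    have hD : 0 < D₀ := hΛ'.2.1
    have hF : 0 < F₀ := hΓ'.2.1
    have hB : 0 < B₀ := hΛ.2.1
    constructor
    · calc 1 / (D₀ * F₀) * (‖f‖ ^ 2 * ‖g‖ ^ 2) = (‖f‖ ^ 2 / D₀) * (‖g‖ ^ 2 / F₀) := by ring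
        _ ≤ _ := mul_le_mul lΛ lΓ (div_nonneg (sq_nonneg _) hF.le) hSΛnn
    · calc _ ≤ (B₀ * ‖f‖ ^ 2) * (E₀ * ‖g‖ ^ 2) :=
          mul_le_mul uΛ uΓ hSΓnn (mul_nonneg hB.le (sq_nonneg _))
        _ = B₀ * E₀ * (‖f‖ ^ 2 * ‖g‖ ^ 2) := by ring
  · intro f g
    obtain ⟨sΛ, lΛ, uΛ⟩ := aux_seq_bounds V' V Λ' Λ v' v D₀ B₀ hΛ' hΛ TΛ' TΛ hTΛ' hTΛ hdual1' f
    obtain ⟨sΓ, lΓ, uΓ⟩ := aux_seq_bounds W' W Γ' Γ w' w F₀ E₀ hΓ' hΓ TΓ' TΓ hTΓ' hTΓ hdual2' g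
    have hrw : ∀ p : ι × κ, (v' p.1 * w' p.2) ^ 2 *
        ‖R'ij p.1 p.2 (projL (tsub tp (V' p.1) (W' p.2)) (tp.tmul f g))‖ ^ 2
        = (v' p.1 ^ 2 * ‖Λ' p.1 (projL (V' p.1) f)‖ ^ 2) *
          (w' p.2 ^ 2 * ‖Γ' p.2 (projL (W' p.2) g)‖ ^ 2) := by
      intro p
      rw [aux_proj_tmul tp (V' p.1) (W' p.2) f g, hR'ij p.1 p.2,
        aux_norm_tmul (tpij p.1 p.2)]
      ring
    have hnn1 : ∀ i, 0 ≤ v' i ^ 2 * ‖Λ' i (projL (V' i) f)‖ ^ 2 := fun i => by positivity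
    have hnn2 : ∀ j, 0 ≤ w' j ^ 2 * ‖Γ' j (projL (W' j) g)‖ ^ 2 := fun j => by positivity
    have hprod : (∑' p : ι × κ, (v' p.1 * w' p.2) ^ 2 *
        ‖R'ij p.1 p.2 (projL (tsub tp (V' p.1) (W' p.2)) (tp.tmul f g))‖ ^ 2)
        = (∑' i, v' i ^ 2 * ‖Λ' i (projL (V' i) f)‖ ^ 2) *
          (∑' j, w' j ^ 2 * ‖Γ' j (projL (W' j) g)‖ ^ 2) := by
      rw [tsum_congr hrw]
      exact (Summable.tsum_mul_tsum sΛ sΓ (sΛ.mul_of_nonneg sΓ hnn1 hnn2)).symm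
    rw [hprod, aux_norm_tmul tp]
    have hSΛnn : 0 ≤ ∑' i, v' i ^ 2 * ‖Λ' i (projL (V' i) f)‖ ^ 2 := tsum_nonneg hnn1
    have hSΓnn : 0 ≤ ∑' j, w' j ^ 2 * ‖Γ' j (projL (W' j) g)‖ ^ 2 := tsum_nonneg hnn2
    have hB : 0 < B₀ := hΛ.2.1
    have hE : 0 < E₀ := hΓ.2.1
    have hD : 0 < D₀ := hΛ'.2.1
    constructor
    · calc 1 / (B₀ * E₀) * (‖f‖ ^ 2 * ‖g‖ ^ 2) = (‖f‖ ^ 2 / B₀) * (‖g‖ ^ 2 / E₀) := by ring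
        _ ≤ _ := mul_le_mul lΛ lΓ (div_nonneg (sq_nonneg _) hE.le) hSΛnn
    · calc _ ≤ (D₀ * ‖f‖ ^ 2) * (F₀ * ‖g‖ ^ 2) :=
          mul_le_mul uΛ uΓ hSΓnn (mul_nonneg hD.le (sq_nonneg _))
        _ = D₀ * F₀ * (‖f‖ ^ 2 * ‖g‖ ^ 2) := by ring
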